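/- Let a, b, c, d be complex numbers with ad − bc = 1 and let σ(u) = (au + b)/(cu + d). Let z, t_1, ..., t_N be pairwise distinct complex numbers such that cu + d ≠ 0 for u ∈ {z, t_1, ..., t_N}. Define ζ(c_N,...,c_1; z) = ∏_{k=2}^{N} 1/(c_k − c_{k−1}) · 1/(c_1 − z). Then ζ(σ(t_N), ..., σ(t_1); σ(z)) · ∏_{k=1}^{N} 1/(ct_k + d)² = ((cz + d)/(ct_N + d)) · ζ(t_N, ..., t_1; z). -/

import Mathlib

/-- `zeta [c_N,...,c_1] z = (∏_{k=2}^N 1/(c_k - c_{k-1})) · 1/(c_1 - z)`, `zeta [] z = 1`. -/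
noncomputable def zeta : List ℂ → ℂ → ℂ
  | [], _ => 1
  | [a], z => (a - z)⁻¹
  | a :: b :: rest, z => (a - b)⁻¹ * zeta (b :: rest) z

lemma sigma_sub (a b c d u v : ℂ) (hdet : a * d - b * c = 1)
    (hu : c * u + d ≠ 0) (hv : c * v + d ≠ 0) :
    (a * u + b) / (c * u + d) - (a * v + b) / (c * v + d)
      = (u - v) / ((c * u + d) * (c * v + d)) := by
  rw [div_sub_div _ _ hu hv]
  congr 1
  linear_combination (u - v) * hdet

/-- Transformation law of `ζ_I` under a Möbius transformation `σ(u) = (au+b)/(cu+d)`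
of determinant 1: for pairwise distinct `z, t_N, ..., t_1` with all denominators
nonzero, `ζ(σ(t_N),...,σ(t_1); σ(z)) · ∏_k (ct_k+d)⁻² = ((cz+d)/(ct_N+d)) ζ(t_N,...,t_1; z)`.
(The list `T = [t_N,...,t_1]` has head `t_N`.) -/
theorem zeta_moebius (a b c d z : ℂ) (hdet : a * d - b * c = 1)
    (T : List ℂ) (hT : T ≠ []) (h : (z :: T).Pairwise (· ≠ ·))
    (hden : ∀ u ∈ z :: T, c * u + d ≠ 0) :
    zeta (T.map fun u => (a * u + b) / (c * u + d)) ((a * z + b) / (c * z + d)) *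
        (T.map fun u => ((c * u + d) ^ 2)⁻¹).prod =
      ((c * z + d) / (c * T.head hT + d)) * zeta T z := by
  induction T with
  | nil => exact absurd rfl hT
  | cons t rest ih =>
    have hz : c * z + d ≠ 0 := hden z (by simp)
    have ht : c * t + d ≠ 0 := hden t (by simp)
    have htz : t - z ≠ 0 := by
      have := (List.pairwise_cons.mp h).1 t (by simp)
      exact sub_ne_zero.mpr this.symm
    cases rest with
    | nil =>
      simp only [List.map, zeta, List.prod_cons, List.prod_nil, List.head]
      rw [sigma_sub a b c d t z hdet ht hz]
      field_simp
    | cons s rest' =>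
      have hs : c * s + d ≠ 0 := hden s (by simp)
      have hts : t - s ≠ 0 := by
        have := (List.pairwise_cons.mp (List.pairwise_cons.mp h).2).1 s (by simp)
        exact sub_ne_zero.mpr this
      have hsub : (z :: s :: rest').Sublist (z :: t :: s :: rest') :=
        ((s :: rest').sublist_cons_self t).cons₂ z
      have hih := ih (List.cons_ne_nil s rest') (h.sublist hsub)
        (fun u hu => hden u (hsub.mem hu))
      simp only [List.map, zeta, List.prod_cons, List.head] at hih ⊢
      rw [sigma_sub a b c d t s hdet ht hs, mul_mul_mul_comm, hih]
      field_simp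
      rw [mul_comm (t * c + d), ← div_div, mul_div_cancel_left₀ _ (by rwa [mul_comm s c])]
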